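/- Let (Γ, x_0) be a perfect rooted tree of height h ≥ 1 and t = h. Then I_t(Γ) : x_0 = I_{t−1}(Γ \ ({x_0} ∪ {z : ℓ(z) = h})), i.e., the colon of the h-path ideal by the root equals the (h−1)-path ideal of the forest obtained by deleting the root and all vertices at the top level. -/

import Mathlib

open MvPolynomial

/-- A rooted tree on the vertex set `V`, encoded by the parent function (every edge is
directed away from the root). -/
structure RTree (V : Type) where
  root : V
  parent : V → V
  parent_root : parent root = root
  reach : ∀ v : V, ∃ n : ℕ, parent^[n] v = root

namespace RTree

variable {V : Type} [Fintype V] [DecidableEq V]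

/-- The level of a vertex: its distance from the root. -/
noncomputable def level (T : RTree V) (v : V) : ℕ := Nat.find (T.reach v)

/-- The height of the rooted tree: the maximal level of a vertex. -/
noncomputable def height (T : RTree V) : ℕ := Finset.univ.sup fun v => T.level v

/-- The outdegree of a vertex: its number of children. -/
noncomputable def outdeg (T : RTree V) (x : V) : ℕ :=
  Nat.card {y : V // T.parent y = x ∧ y ≠ T.root}

/-- A leaf is a vertex with no children. -/
def IsLeaf (T : RTree V) (x : V) : Prop := ∀ y : V, T.parent y = x → y = T.root

/-- A rooted tree is perfect if every leaf has level equal to the height. -/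
def Perfect (T : RTree V) : Prop := ∀ x : V, T.IsLeaf x → T.level x = T.height

/-- The monomial of the directed path on `t` vertices ending at `v`
(valid when `level v ≥ t - 1`). -/
noncomputable def pathMonomial (T : RTree V) (k : Type) [Field k] (t : ℕ) (v : V) :
    MvPolynomial V k := ∏ j ∈ Finset.range t, MvPolynomial.X (T.parent^[j] v)

/-- The `t`-path ideal `I_t(Γ)`: generated by the monomials of directed paths on
`t` vertices. -/
noncomputable def pathIdeal (T : RTree V) (k : Type) [Field k] (t : ℕ) :
    Ideal (MvPolynomial V k) :=
  Ideal.span {m | ∃ v : V, t ≤ T.level v + 1 ∧ m = T.pathMonomial k t v}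

end RTree


namespace RTree

variable {V : Type} [Fintype V] [DecidableEq V] (T : RTree V)

lemma parent_iterate_level (v : V) : T.parent^[T.level v] v = T.root :=
  Nat.find_spec (T.reach v)

lemma iterate_ne_root {v : V} {j : ℕ} (h : j < T.level v) : T.parent^[j] v ≠ T.root :=
  Nat.find_min (T.reach v) h

lemma iterate_root (n : ℕ) : T.parent^[n] T.root = T.root :=
  Function.iterate_fixed T.parent_root n

lemma iterate_of_level_le {v : V} {n : ℕ} (h : T.level v ≤ n) : T.parent^[n] v = T.root := by
  rw [← Nat.sub_add_cancel h, Function.iterate_add_apply, T.parent_iterate_level, T.iterate_root]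

lemma level_iterate (v : V) {j : ℕ} (h : j ≤ T.level v) :
    T.level (T.parent^[j] v) = T.level v - j := by
  have key : ∀ n : ℕ, T.parent^[n] (T.parent^[j] v) = T.parent^[n + j] v := fun n =>
    (Function.iterate_add_apply _ n j v).symm
  show Nat.find _ = _
  rw [Nat.find_eq_iff]
  refine ⟨?_, fun n hn => ?_⟩
  · rw [key, Nat.sub_add_cancel h]; exact T.parent_iterate_level v
  · rw [key]; exact T.iterate_ne_root (by omega)

lemma level_le_height (v : V) : T.level v ≤ T.height :=
  Finset.le_sup (Finset.mem_univ v)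

noncomputable def pathExp (t : ℕ) (v : V) : V →₀ ℕ :=
  ∑ j ∈ Finset.range t, Finsupp.single (T.parent^[j] v) 1

lemma pathExp_succ (t : ℕ) (v : V) :
    T.pathExp (t + 1) v = T.pathExp t v + Finsupp.single (T.parent^[t] v) 1 :=
  Finset.sum_range_succ _ _

lemma pathMonomial_eq (k : Type) [Field k] (t : ℕ) (v : V) :
    T.pathMonomial k t v = monomial (T.pathExp t v) (1 : k) := by
  induction t with
  | zero => simp [pathMonomial, pathExp, monomial_zero']
  | succ n ih =>
      rw [pathMonomial, Finset.prod_range_succ, ← pathMonomial, ih, T.pathExp_succ, X,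
        monomial_mul, one_mul]

lemma pathExp_succ' (t : ℕ) (v : V) :
    T.pathExp (t + 1) v = Finsupp.single v 1 + T.pathExp t (T.parent v) := by
  rw [pathExp, Finset.sum_range_succ', add_comm]
  simp [pathExp, Function.iterate_succ_apply]

lemma pathExp_apply_root_eq_zero {t : ℕ} {v : V} (h : t ≤ T.level v) :
    T.pathExp t v T.root = 0 := by
  rw [pathExp, Finset.sum_apply']
  refine Finset.sum_eq_zero fun j hj => ?_
  rw [Finset.mem_range] at hj
  exact Finsupp.single_eq_of_ne' (T.iterate_ne_root (by omega))

end RTree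

/-- For a perfect rooted tree of height `h ≥ 1` and `t = h`,
`I_t(Γ) : x_0 = I_{t-1}(Γ \ ({x_0} ∪ {z : ℓ(z) = h}))`: the colon of the `h`-path ideal
by the root variable equals the `(h-1)`-path ideal of the forest obtained by deleting the
root and all vertices at the top level. -/
theorem path_ideal_height_colon_root
    {k V : Type} [Field k] [Fintype V] [DecidableEq V] (T : RTree V)
    (hh : 1 ≤ T.height) (hperf : T.Perfect) :
    Submodule.colon (T.pathIdeal k T.height)
        (Ideal.span {(X T.root : MvPolynomial V k)}) =
      Ideal.span {m | ∃ v : V, (∀ j, j < T.height - 1 →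
          T.parent^[j] v ≠ T.root ∧ T.level (T.parent^[j] v) ≠ T.height) ∧
        m = T.pathMonomial k (T.height - 1) v} := by
  set h := T.height with hdef
  -- the two generating sets, as sets of exponents
  set S1 : Set (V →₀ ℕ) := {s | ∃ v : V, h ≤ T.level v + 1 ∧ s = T.pathExp h v} with hS1
  set S2 : Set (V →₀ ℕ) := {s | ∃ v : V, (∀ j, j < h - 1 →
      T.parent^[j] v ≠ T.root ∧ T.level (T.parent^[j] v) ≠ h) ∧
      s = T.pathExp (h - 1) v} with hS2
  have e1 : T.pathIdeal k h = Ideal.span ((fun s => monomial s (1 : k)) '' S1) := by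
    rw [RTree.pathIdeal]
    congr 1
    ext m
    constructor
    · rintro ⟨v, hv, rfl⟩
      exact ⟨T.pathExp h v, ⟨v, hv, rfl⟩, (T.pathMonomial_eq k h v).symm⟩
    · rintro ⟨s, ⟨v, hv, rfl⟩, rfl⟩
      exact ⟨v, hv, (T.pathMonomial_eq k h v).symm⟩
  have e2 : ({m | ∃ v : V, (∀ j, j < h - 1 →
          T.parent^[j] v ≠ T.root ∧ T.level (T.parent^[j] v) ≠ h) ∧
        m = T.pathMonomial k (h - 1) v} : Set (MvPolynomial V k)) =
      (fun s => monomial s (1 : k)) '' S2 := by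
    ext m
    constructor
    · rintro ⟨v, hv, rfl⟩
      exact ⟨T.pathExp (h - 1) v, ⟨v, hv, rfl⟩, (T.pathMonomial_eq k (h - 1) v).symm⟩
    · rintro ⟨s, ⟨v, hv, rfl⟩, rfl⟩
      exact ⟨v, hv, (T.pathMonomial_eq k (h - 1) v).symm⟩
  -- the key combinatorial equivalence
  have key : ∀ d : V →₀ ℕ,
      (∃ s ∈ S1, s ≤ d + Finsupp.single T.root 1) ↔ (∃ s ∈ S2, s ≤ d) := by
    intro d
    constructor
    · rintro ⟨s, ⟨v, hv, rfl⟩, hle⟩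
      have hlev : T.level v ≤ h := T.level_le_height v
      rcases lt_or_eq_of_le hlev with hcase | hcase
      · -- level v = h - 1
        have hl : T.level v = h - 1 := by omega
        have hsplit : T.pathExp h v =
            T.pathExp (h - 1) v + Finsupp.single T.root 1 := by
          have : h = (h - 1) + 1 := by omega
          rw [this, T.pathExp_succ, T.iterate_of_level_le (by omega)]; rfl
        rw [hsplit] at hle
        refine ⟨T.pathExp (h - 1) v, ⟨v, fun j hj => ?_, rfl⟩,
          (add_le_add_iff_right _).mp hle⟩
        constructor
        · exact T.iterate_ne_root (by omega)
        · rw [T.level_iterate v (by omega)]; omega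
      · -- level v = h
        have hle' : T.pathExp h v ≤ d := by
          rw [Finsupp.le_def] at hle ⊢
          intro x
          by_cases hx : x = T.root
          · subst hx
            rw [T.pathExp_apply_root_eq_zero (by omega)]
            exact Nat.zero_le _
          · have := hle x
            rwa [Finsupp.add_apply, Finsupp.single_apply, if_neg (Ne.symm hx),
              add_zero] at this
        have hsplit : T.pathExp h v =
            Finsupp.single v 1 + T.pathExp (h - 1) (T.parent v) := by
          have : h = (h - 1) + 1 := by omega
          rw [this, T.pathExp_succ']; rfl
        refine ⟨T.pathExp (h - 1) (T.parent v), ⟨T.parent v, fun j hj => ?_, rfl⟩,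
          le_trans (by rw [hsplit]; exact le_add_self) hle'⟩
        rw [← Function.iterate_succ_apply]
        constructor
        · exact T.iterate_ne_root (by omega)
        · rw [T.level_iterate v (by omega)]; omega
    · rintro ⟨s, ⟨v, hv, rfl⟩, hle⟩
      by_cases h1 : h = 1
      · refine ⟨T.pathExp h T.root, ⟨T.root, by omega, rfl⟩, ?_⟩
        have : T.pathExp h T.root = Finsupp.single T.root 1 := by
          have : h = 0 + 1 := by omega
          rw [this, T.pathExp_succ]
          simp [RTree.pathExp]
        rw [this]
        exact le_add_self
      · -- h ≥ 2, so the condition is nonvacuous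
        obtain ⟨hvroot, hvlev⟩ := hv 0 (by omega)
        simp only [Function.iterate_zero_apply] at hvroot hvlev
        have hlev : h - 1 ≤ T.level v := by
          by_contra hc
          push_neg at hc
          exact (hv (T.level v) (by omega)).1 (T.parent_iterate_level v)
        have hlev' : T.level v = h - 1 := by
          have := T.level_le_height v
          omega
        refine ⟨T.pathExp h v, ⟨v, by omega, rfl⟩, ?_⟩
        have hsplit : T.pathExp h v =
            T.pathExp (h - 1) v + Finsupp.single T.root 1 := by
          have : h = (h - 1) + 1 := by omega
          rw [this, T.pathExp_succ, T.iterate_of_level_le (by omega)]; rfl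
        rw [hsplit]
        exact add_le_add_left hle _
  ext f
  rw [Ideal.mem_colon_span_singleton, e1, e2, mem_ideal_span_monomial_image,
    mem_ideal_span_monomial_image]
  rw [support_mul_X]
  constructor
  · intro H d hd
    exact (key d).mp (H _ (Finset.mem_map_of_mem _ hd))
  · intro H d hd
    rw [Finset.mem_map] at hd
    obtain ⟨d', hd', rfl⟩ := hd
    exact (key d').mpr (H d' hd')
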